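/- Let n ≥ 3 be odd and set d = (n+1)/2. If X is a full-rank subgroup of the weight lattice Λ of SL(n+1) containing ℤS^+, then there exist e, r, m ∈ ℕ with e | d, 0 ≤ r ≤ e−1 and m ≥ 1 such that X = ⟨σ_2, σ_3, …, σ_{n−1}, e·ω_{n−1}, r·ω_{n−1} + m·ω_n⟩_ℤ. -/

import Mathlib

/-- The fundamental weights `ω_1, …, ω_n` of `SL(n+1)` in the weight lattice
`Λ = ℤⁿ`: `ω_j` is the `j`-th standard basis vector for `1 ≤ j ≤ n`, and by
convention `ω_0 = ω_{n+1} = 0`. -/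
def w (n : ℕ) (j : ℕ) : Fin n → ℤ := fun i => if (i : ℕ) + 1 = j then 1 else 0

/-- The simple roots of `SL(n+1)`: `α_i = 2ω_i − ω_{i−1} − ω_{i+1}` for `1 ≤ i ≤ n`. -/
def sroot (n : ℕ) (i : ℕ) : Fin n → ℤ := 2 • w n i - w n (i - 1) - w n (i + 1)

/-- `σ_i = α_i + α_{i+1}` for `1 ≤ i ≤ n−1`. -/
def sig (n : ℕ) (i : ℕ) : Fin n → ℤ := sroot n i + sroot n (i + 1)

/-- `ℤS⁺`, the subgroup of `Λ` generated by `σ_1, …, σ_{n−1}`. -/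
def ZSplus (n : ℕ) : Submodule ℤ (Fin n → ℤ) :=
  Submodule.span ℤ (sig n '' Set.Icc 1 (n - 1))

/-- generic integer linear functional with coefficient `c (i+1)` at coordinate `i` -/
def lfun (n : ℕ) (c : ℕ → ℤ) : (Fin n → ℤ) →ₗ[ℤ] ℤ where
  toFun x := ∑ i, x i * c ((i : ℕ) + 1)
  map_add' x y := by simp [add_mul, Finset.sum_add_distrib]
  map_smul' a x := by simp [Finset.mul_sum, mul_assoc]

lemma w_apply (n j : ℕ) (i : Fin n) : w n j i = if (i : ℕ) + 1 = j then 1 else 0 := rfl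

lemma w_zero (n : ℕ) : w n 0 = 0 := by
  funext i; simp [w]

lemma w_of_gt (n j : ℕ) (h : n < j) : w n j = 0 := by
  funext i; simp only [w, Pi.zero_apply, ite_eq_right_iff]
  intro hij; exact absurd hij (by omega)

lemma lfun_w (n : ℕ) (c : ℕ → ℤ) (j : ℕ) (h1 : 1 ≤ j) (h2 : j ≤ n) :
    lfun n c (w n j) = c j := by
  have hlt : j - 1 < n := by omega
  simp only [lfun, LinearMap.coe_mk, AddHom.coe_mk]
  rw [Finset.sum_eq_single (⟨j - 1, hlt⟩ : Fin n)]
  · have hj : ((⟨j - 1, hlt⟩ : Fin n) : ℕ) + 1 = j := by simp; omega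
    rw [w_apply, if_pos hj, hj, one_mul]
  · intro b _ hb
    have : (b : ℕ) + 1 ≠ j := by
      intro hc; apply hb; apply Fin.ext; simp; omega
    simp [w_apply, this]
  · intro h; exact absurd (Finset.mem_univ _) h

lemma lfun_w' (n : ℕ) (c : ℕ → ℤ) (hc : c (n + 1) = 0) (j : ℕ) (h1 : 1 ≤ j)
    (h2 : j ≤ n + 1) : lfun n c (w n j) = c j := by
  rcases Nat.lt_or_ge j (n + 1) with h | h
  · exact lfun_w n c j h1 (by omega)
  · have hj : j = n + 1 := by omega
    subst hj
    rw [w_of_gt n (n+1) (by omega), map_zero, hc]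

lemma sig_eq (n j : ℕ) : sig n j = w n j + w n (j+1) - w n (j-1) - w n (j+2) := by
  funext i
  simp only [sig, sroot, Nat.add_sub_cancel, Pi.add_apply, Pi.sub_apply, Pi.smul_apply,
    smul_eq_mul]
  ring


/-- coefficient of the first functional: `π₁(ω_j) = d − ⌈j/2⌉` -/
def pa (n : ℕ) (j : ℕ) : ℤ := (((n+1)/2 : ℕ) : ℤ) - (((j+1)/2 : ℕ) : ℤ)
/-- coefficient of the second functional: `π₂(ω_j) = j mod 2` -/
def pb (j : ℕ) : ℤ := ((j % 2 : ℕ) : ℤ)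

def piL (n : ℕ) : (Fin n → ℤ) →ₗ[ℤ] ℤ × ℤ := (lfun n (pa n)).prod (lfun n pb)

lemma pa_top (n : ℕ) (hno : Odd n) : pa n (n + 1) = 0 := by
  obtain ⟨k, rfl⟩ := hno; simp only [pa]; omega

lemma pb_top (n : ℕ) (hno : Odd n) : pb (n + 1) = 0 := by
  obtain ⟨k, rfl⟩ := hno; simp only [pb]; omega

lemma piL_w (n : ℕ) (hno : Odd n) (j : ℕ) (h1 : 1 ≤ j) (h2 : j ≤ n + 1) :
    piL n (w n j) = (pa n j, pb j) := by
  simp only [piL, LinearMap.prod_apply, Function.prod]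
  rw [lfun_w' n _ (pa_top n hno) j h1 h2, lfun_w' n _ (pb_top n hno) j h1 h2]

lemma piL_sig (n : ℕ) (hno : Odd n) (j : ℕ) (h1 : 2 ≤ j) (h2 : j ≤ n - 1) :
    piL n (sig n j) = 0 := by
  have hn1 : 1 ≤ n := by omega
  rw [sig_eq, map_sub, map_sub, map_add,
    piL_w n hno j (by omega) (by omega), piL_w n hno (j+1) (by omega) (by omega),
    piL_w n hno (j-1) (by omega) (by omega), piL_w n hno (j+2) (by omega) (by omega)]
  have e1 : pa n j + pa n (j+1) - pa n (j-1) - pa n (j+2) = 0 := by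
    simp only [pa]; omega
  have e2 : pb j + pb (j+1) - pb (j-1) - pb (j+2) = 0 := by
    simp only [pb]; omega
  ext <;> simp <;> omega

lemma piL_sig1 (n : ℕ) (hn : 3 ≤ n) (hno : Odd n) :
    piL n (sig n 1) = ((((n+1)/2 : ℕ) : ℤ), 0) := by
  rw [sig_eq]
  simp only [Nat.sub_self, w_zero]
  rw [map_sub, map_sub, map_add, map_zero,
    piL_w n hno 1 (by omega) (by omega), piL_w n hno 2 (by omega) (by omega),
    piL_w n hno 3 (by omega) (by omega)]
  obtain ⟨k, hk⟩ := hno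
  ext <;> simp [pa, pb] <;> omega

lemma piL_w_pred (n : ℕ) (hn : 3 ≤ n) (hno : Odd n) : piL n (w n (n-1)) = (1, 0) := by
  rw [piL_w n hno (n-1) (by omega) (by omega)]
  obtain ⟨k, hk⟩ := hno
  ext <;> simp [pa, pb] <;> omega

lemma piL_w_n (n : ℕ) (hn : 3 ≤ n) (hno : Odd n) : piL n (w n n) = (0, 1) := by
  rw [piL_w n hno n (by omega) (by omega)]
  obtain ⟨k, hk⟩ := hno
  ext <;> simp [pa, pb] <;> omega

/-- span of `σ_2, …, σ_{n−1}` -/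
def Vsp (n : ℕ) : Submodule ℤ (Fin n → ℤ) :=
  Submodule.span ℤ (sig n '' Set.Icc 2 (n - 1))

lemma Vsp_le_ker (n : ℕ) (hno : Odd n) : Vsp n ≤ LinearMap.ker (piL n) := by
  rw [Vsp, Submodule.span_le]
  rintro _ ⟨j, ⟨hj1, hj2⟩, rfl⟩
  exact LinearMap.mem_ker.2 (piL_sig n hno j hj1 hj2)

lemma sig_apply_eval (n j : ℕ) (i : Fin n) :
    sig n j i = (if (i:ℕ)+1 = j then 1 else 0) + (if (i:ℕ)+1 = j+1 then 1 else 0)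
      - (if (i:ℕ)+1 = j-1 then 1 else 0) - (if (i:ℕ)+1 = j+2 then 1 else 0) := by
  rw [sig_eq]
  simp [w_apply]

lemma reduce (n : ℕ) (hn : 3 ≤ n) :
    ∀ t k, k + t = n - 2 → ∀ x : Fin n → ℤ, (∀ i : Fin n, (i:ℕ) < k → x i = 0) →
      ∃ p q : ℤ, x - p • w n (n-1) - q • w n n ∈ Vsp n := by
  intro t
  induction t with
  | zero =>
    intro k hk x hx
    refine ⟨x ⟨n-2, by omega⟩, x ⟨n-1, by omega⟩, ?_⟩
    have hz : x - x ⟨n-2, by omega⟩ • w n (n-1) - x ⟨n-1, by omega⟩ • w n n = 0 := by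
      funext i
      simp only [Pi.sub_apply, Pi.smul_apply, smul_eq_mul, w_apply, Pi.zero_apply]
      rcases Nat.lt_or_ge (i : ℕ) (n-2) with h | h
      · rw [hx i (by omega), if_neg (by omega), if_neg (by omega)]; ring
      · rcases Nat.lt_or_ge (i : ℕ) (n-1) with h' | h'
        · have : i = (⟨n-2, by omega⟩ : Fin n) := Fin.ext (show (i:ℕ) = n-2 by omega)
          rw [this, if_pos (show n-2+1 = n-1 by omega), if_neg (show ¬(n-2+1 = n) by omega)]
          ring
        · have : i = (⟨n-1, by omega⟩ : Fin n) :=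
            Fin.ext (show (i:ℕ) = n-1 by have := i.isLt; omega)
          rw [this, if_neg (show ¬(n-1+1 = n-1) by omega), if_pos (show n-1+1 = n by omega)]
          ring
    rw [hz]; exact Submodule.zero_mem _
  | succ t IH =>
    intro k hk x hx
    have hkn : k < n := by omega
    set c : ℤ := x ⟨k, hkn⟩ with hc
    have hmem : sig n (k+2) ∈ Vsp n :=
      Submodule.subset_span ⟨k+2, ⟨by omega, by omega⟩, rfl⟩
    have hstep : ∀ i : Fin n, (i:ℕ) < k + 1 → (x + c • sig n (k+2)) i = 0 := by
      intro i hi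
      simp only [Pi.add_apply, Pi.smul_apply, smul_eq_mul]
      rcases Nat.lt_or_ge (i : ℕ) k with h | h
      · have hs : sig n (k+2) i = 0 := by
          rw [sig_apply_eval,
            if_neg (show ¬((i:ℕ)+1 = k+2) by omega),
            if_neg (show ¬((i:ℕ)+1 = k+2+1) by omega),
            if_neg (show ¬((i:ℕ)+1 = k+2-1) by omega),
            if_neg (show ¬((i:ℕ)+1 = k+2+2) by omega)]
          ring
        rw [hs, hx i h]; ring
      · have hs : sig n (k+2) i = -1 := by
          rw [sig_apply_eval,
            if_neg (show ¬((i:ℕ)+1 = k+2) by omega),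
            if_neg (show ¬((i:ℕ)+1 = k+2+1) by omega),
            if_pos (show (i:ℕ)+1 = k+2-1 by omega),
            if_neg (show ¬((i:ℕ)+1 = k+2+2) by omega)]
          ring
        have hxi : x i = c := by
          rw [hc, show (⟨k, hkn⟩ : Fin n) = i from Fin.ext (show k = (i:ℕ) by omega)]
        rw [hs, hxi]; ring
    obtain ⟨p, q, h⟩ := IH (k+1) (by omega) (x + c • sig n (k+2)) hstep
    refine ⟨p, q, ?_⟩
    have h2 := Submodule.add_mem _ h (Submodule.smul_mem _ (-c) hmem)
    have heq : x + c • sig n (k+2) - p • w n (n-1) - q • w n n + (-c) • sig n (k+2)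
        = x - p • w n (n-1) - q • w n n := by
      module
    rwa [heq] at h2

lemma ker_eq_Vsp (n : ℕ) (hn : 3 ≤ n) (hno : Odd n) :
    LinearMap.ker (piL n) = Vsp n := by
  refine le_antisymm ?_ (Vsp_le_ker n hno)
  intro x hx
  obtain ⟨p, q, hy⟩ := reduce n hn (n-2) 0 (by omega) x (fun i hi => absurd hi (by omega))
  have hpq : piL n (x - p • w n (n-1) - q • w n n) = 0 :=
    Vsp_le_ker n hno hy
  rw [map_sub, map_sub, map_smul, map_smul, LinearMap.mem_ker.1 hx,
    piL_w_pred n hn hno, piL_w_n n hn hno] at hpq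
  have hp : p = 0 ∧ q = 0 := by
    have h1 := congrArg Prod.fst hpq
    have h2 := congrArg Prod.snd hpq
    simp at h1 h2
    exact ⟨h1, h2⟩
  rw [hp.1, hp.2] at hy
  simpa using hy

lemma pb_n (n : ℕ) (hno : Odd n) : pb n = 1 := by
  obtain ⟨k, rfl⟩ := hno; simp only [pb]; omega

lemma exists_pi2_ne (n : ℕ) (hn : 3 ≤ n) (hno : Odd n) (X : Submodule ℤ (Fin n → ℤ))
    (hrank : Module.finrank ℤ X = n) : ∃ x ∈ X, lfun n pb x ≠ 0 := by
  by_contra hcon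
  push_neg at hcon
  let f : X →ₗ[ℤ] (Fin (n-1) → ℤ) :=
    { toFun := fun x i => (x : Fin n → ℤ) (Fin.castLE (by omega) i)
      map_add' := by intros; rfl
      map_smul' := by intros; rfl }
  have hinj : Function.Injective f := by
    rw [← LinearMap.ker_eq_bot, eq_bot_iff]
    intro a ha
    have ha' : f a = 0 := ha
    have hsmall : ∀ i : Fin n, (i:ℕ) < n-1 → (a : Fin n → ℤ) i = 0 := by
      intro i hi
      have := congrFun ha' ⟨(i:ℕ), hi⟩
      simpa [f, Fin.ext_iff] using this
    have hlast : (a : Fin n → ℤ) ⟨n-1, by omega⟩ = 0 := by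
      have h0 : lfun n pb (a : Fin n → ℤ) = 0 := hcon _ a.2
      have hsum : lfun n pb (a : Fin n → ℤ)
          = (a : Fin n → ℤ) ⟨n-1, by omega⟩ * pb ((n-1) + 1) := by
        simp only [lfun, LinearMap.coe_mk, AddHom.coe_mk]
        rw [Finset.sum_eq_single (⟨n-1, by omega⟩ : Fin n)]
        · intro b _ hb
          have hbv : (b:ℕ) < n-1 := by
            have := b.isLt
            rcases Nat.lt_or_ge (b:ℕ) (n-1) with h | h
            · exact h
            · exact absurd (Fin.ext (show (b:ℕ) = n-1 by omega)) hb
          rw [hsmall b hbv, zero_mul]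
        · intro h; exact absurd (Finset.mem_univ _) h
      rw [h0] at hsum
      have hpb : pb ((n-1)+1) = 1 := by
        rw [show (n-1)+1 = n by omega]; exact pb_n n hno
      rw [hpb, mul_one] at hsum
      exact hsum.symm
    have : (a : Fin n → ℤ) = 0 := by
      funext i
      rcases Nat.lt_or_ge (i:ℕ) (n-1) with h | h
      · exact hsmall i h
      · have : i = (⟨n-1, by omega⟩ : Fin n) :=
          Fin.ext (show (i:ℕ) = n-1 by have := i.isLt; omega)
        rw [this]; exact hlast
    rw [Submodule.mem_bot]
    exact Subtype.ext this
  have hle := LinearMap.finrank_le_finrank_of_injective hinj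
  rw [hrank, Module.finrank_pi] at hle
  simp only [Fintype.card_fin] at hle
  omega

lemma classify (d : ℕ) (hd : 0 < d) (G : Submodule ℤ (ℤ × ℤ))
    (hdG : ((d:ℤ), 0) ∈ G) (hex : ∃ g ∈ G, g.2 ≠ 0) :
    ∃ e r m : ℕ, (e:ℤ) ∣ (d:ℤ) ∧ r < e ∧ 1 ≤ m ∧
      G = Submodule.span ℤ {((e:ℤ), 0), ((r:ℤ), (m:ℤ))} := by
  set A : Ideal ℤ := G.comap (LinearMap.inl ℤ ℤ ℤ) with hA
  set B : Ideal ℤ := G.map (LinearMap.snd ℤ ℤ ℤ) with hB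
  obtain ⟨a, ha⟩ := Submodule.IsPrincipal.principal A
  obtain ⟨b, hb⟩ := Submodule.IsPrincipal.principal B
  have memA : ∀ x : ℤ, (x, (0:ℤ)) ∈ G ↔ a ∣ x := by
    intro x
    rw [show ((x, (0:ℤ)) ∈ G) ↔ x ∈ A from Iff.rfl, ha, Submodule.mem_span_singleton]
    constructor
    · rintro ⟨u, rfl⟩; exact ⟨u, (smul_eq_mul _ _).symm.trans (mul_comm u a)⟩
    · rintro ⟨u, rfl⟩; exact ⟨u, (mul_comm a u).symm.trans (smul_eq_mul _ _).symm⟩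
  have memB : ∀ y : ℤ, (∃ g ∈ G, g.2 = y) ↔ b ∣ y := by
    intro y
    have : y ∈ B ↔ b ∣ y := by
      rw [hb, Submodule.mem_span_singleton]
      constructor
      · rintro ⟨u, rfl⟩; exact ⟨u, (smul_eq_mul _ _).symm.trans (mul_comm u b)⟩
      · rintro ⟨u, rfl⟩; exact ⟨u, (mul_comm b u).symm.trans (smul_eq_mul _ _).symm⟩
    rw [← this, hB, Submodule.mem_map]
    constructor
    · rintro ⟨g, hg, rfl⟩; exact ⟨g, hg, rfl⟩
    · rintro ⟨g, hg, rfl⟩; exact ⟨g, hg, rfl⟩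
  have had : a ∣ (d:ℤ) := (memA _).1 hdG
  have ha0 : a ≠ 0 := by
    rintro rfl
    rw [zero_dvd_iff] at had
    omega
  set e : ℕ := a.natAbs with he
  have hepos : 0 < e := Int.natAbs_pos.2 ha0
  have heG : (((e:ℕ):ℤ), (0:ℤ)) ∈ G := (memA _).2 (Int.natAbs_dvd.1 dvd_rfl)
  have hed : ((e:ℕ):ℤ) ∣ (d:ℤ) := Int.natAbs_dvd.2 had
  have hb0 : b ≠ 0 := by
    rintro rfl
    obtain ⟨g, hg, hg2⟩ := hex
    have := (memB g.2).1 ⟨g, hg, rfl⟩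
    rw [zero_dvd_iff] at this
    exact hg2 this
  set m : ℕ := b.natAbs with hm
  have hmpos : 1 ≤ m := Int.natAbs_pos.2 hb0
  obtain ⟨g', hg', hg'2⟩ := (memB ((m:ℕ):ℤ)).2 (Int.natAbs_dvd.1 dvd_rfl)
  set c : ℤ := g'.1 with hcdef
  have hcm : (c, ((m:ℕ):ℤ)) ∈ G := by
    have : g' = (c, ((m:ℕ):ℤ)) := by
      rw [hcdef, ← hg'2]
    rwa [this] at hg'
  set r' : ℤ := c % (e:ℤ) with hr'
  have hr'nonneg : 0 ≤ r' := Int.emod_nonneg c (by exact_mod_cast hepos.ne')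
  have hr'lt : r' < (e:ℤ) := Int.emod_lt_of_pos c (by exact_mod_cast hepos)
  have hrm : (r', ((m:ℕ):ℤ)) ∈ G := by
    have hsub := Submodule.sub_mem G hcm (Submodule.smul_mem G (c / (e:ℤ)) heG)
    have : (c, ((m:ℕ):ℤ)) - (c / (e:ℤ)) • (((e:ℕ):ℤ), (0:ℤ)) = (r', ((m:ℕ):ℤ)) := by
      rw [hr', Int.emod_def, Prod.ext_iff]
      refine ⟨by simp [mul_comm], by simp⟩
    rwa [this] at hsub
  refine ⟨e, r'.toNat, m, hed, by omega, hmpos, ?_⟩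
  have hrcast : ((r'.toNat : ℕ) : ℤ) = r' := Int.toNat_of_nonneg hr'nonneg
  rw [hrcast]
  apply le_antisymm
  · intro z hz
    have hz2 : ((m:ℕ):ℤ) ∣ z.2 := Int.natAbs_dvd.2 ((memB z.2).1 ⟨z, hz, rfl⟩)
    obtain ⟨t, ht⟩ := hz2
    have hy := Submodule.sub_mem G hz (Submodule.smul_mem G t hrm)
    have hy2 : (z - t • (r', ((m:ℕ):ℤ))).2 = 0 := by
      simp [ht]; ring
    have hy1 : (z - t • (r', ((m:ℕ):ℤ))).1 = z.1 - t * r' := by simp [mul_comm]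
    have hyG : (z.1 - t * r', (0:ℤ)) ∈ G := by
      have : (z.1 - t * r', (0:ℤ)) = z - t • (r', ((m:ℕ):ℤ)) := by
        rw [← hy1, ← hy2]
      rwa [this]
    have := (memA _).1 hyG
    obtain ⟨s, hs⟩ := (Int.natAbs_dvd.2 this : ((e:ℕ):ℤ) ∣ (z.1 - t * r'))
    apply Submodule.mem_span_pair.2
    refine ⟨s, t, ?_⟩
    rw [Prod.ext_iff]
    refine ⟨?_, ?_⟩
    · simp only [Prod.fst_add, Prod.smul_fst, smul_eq_mul]
      linear_combination -hs
    · simp only [Prod.snd_add, Prod.smul_snd, smul_eq_mul, ht]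
      ring
  · rw [Submodule.span_le]
    rintro z hz
    rcases hz with rfl | hz
    · exact heG
    · rw [Set.mem_singleton_iff] at hz
      subst hz
      rw [hrcast] at *
      exact hrm

/-- For `n ≥ 3` odd and `d = (n+1)/2`: if `X` is a full-rank subgroup of the weight
lattice `Λ` of `SL(n+1)` containing `ℤS⁺`, then there exist `e, r, m ∈ ℕ` with
`e ∣ d`, `0 ≤ r ≤ e−1` and `m ≥ 1` such that
`X = ⟨σ_2, σ_3, …, σ_{n−1}, e·ω_{n−1}, r·ω_{n−1} + m·ω_n⟩_ℤ`. -/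
theorem stmt13 (n : ℕ) (hn : 3 ≤ n) (hno : Odd n) (X : Submodule ℤ (Fin n → ℤ))
    (hrank : Module.finrank ℤ X = n) (hZS : ZSplus n ≤ X) :
    ∃ e r m : ℕ, e ∣ (n + 1) / 2 ∧ r ≤ e - 1 ∧ 1 ≤ m ∧
      X = Submodule.span ℤ (sig n '' Set.Icc 2 (n - 1) ∪
        {(e : ℤ) • w n (n - 1), (r : ℤ) • w n (n - 1) + (m : ℤ) • w n n}) := by
  have hd : 0 < (n+1)/2 := by omega
  have hVX : Vsp n ≤ X := by
    refine le_trans ?_ hZS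
    rw [Vsp, ZSplus]
    apply Submodule.span_mono
    apply Set.image_mono
    intro j hj
    exact ⟨le_trans (by omega : (1:ℕ) ≤ 2) hj.1, hj.2⟩
  have hs1 : sig n 1 ∈ X := hZS (Submodule.subset_span ⟨1, ⟨le_refl 1, by omega⟩, rfl⟩)
  set G := X.map (piL n) with hGdef
  have hdG : ((((n+1)/2 : ℕ):ℤ), (0:ℤ)) ∈ G := ⟨sig n 1, hs1, piL_sig1 n hn hno⟩
  have hex : ∃ g ∈ G, g.2 ≠ 0 := by
    obtain ⟨x, hxX, hx⟩ := exists_pi2_ne n hn hno X hrank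
    exact ⟨piL n x, ⟨x, hxX, rfl⟩, hx⟩
  obtain ⟨e, r, m, hed, hre, hm, hG⟩ := classify ((n+1)/2) hd G hdG hex
  have hkerV := ker_eq_Vsp n hn hno
  have hwp := piL_w_pred n hn hno
  have hwn := piL_w_n n hn hno
  have hpre1 : piL n ((e:ℤ) • w n (n-1)) = ((e:ℤ), 0) := by
    rw [map_smul, hwp, Prod.smul_mk]
    simp
  have hpre2 : piL n ((r:ℤ) • w n (n-1) + (m:ℤ) • w n n) = ((r:ℤ), (m:ℤ)) := by
    rw [map_add, map_smul, map_smul, hwp, hwn, Prod.smul_mk, Prod.smul_mk]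
    simp
  set S : Set (Fin n → ℤ) := sig n '' Set.Icc 2 (n - 1) ∪
      {(e : ℤ) • w n (n - 1), (r : ℤ) • w n (n - 1) + (m : ℤ) • w n n} with hSdef
  have hpre1S : (e:ℤ) • w n (n-1) ∈ S := Or.inr (Or.inl rfl)
  have hpre2S : (r:ℤ) • w n (n-1) + (m:ℤ) • w n n ∈ S := Or.inr (Or.inr rfl)
  have hVS : Vsp n ≤ Submodule.span ℤ S :=
    Submodule.span_mono Set.subset_union_left
  refine ⟨e, r, m, by exact_mod_cast hed, by omega, hm, ?_⟩
  apply le_antisymm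
  · intro x hx
    have hGx : piL n x ∈ G := ⟨x, hx, rfl⟩
    rw [hG] at hGx
    obtain ⟨s, t, hst⟩ := Submodule.mem_span_pair.1 hGx
    set y := s • ((e:ℤ) • w n (n-1)) + t • ((r:ℤ) • w n (n-1) + (m:ℤ) • w n n) with hy
    have hySpan : y ∈ Submodule.span ℤ S :=
      Submodule.add_mem _
        (Submodule.smul_mem _ _ (Submodule.subset_span hpre1S))
        (Submodule.smul_mem _ _ (Submodule.subset_span hpre2S))
    have hyval : piL n y = piL n x := by
      rw [hy, map_add, map_smul, hpre1, map_smul, hpre2, hst]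
    have hxy : x - y ∈ Vsp n := by
      rw [← hkerV, LinearMap.mem_ker, map_sub, hyval, sub_self]
    have hmem := Submodule.add_mem _ (hVS hxy) hySpan
    rwa [sub_add_cancel] at hmem
  · rw [Submodule.span_le]
    rintro z (⟨j, hj, rfl⟩ | hz)
    · exact hVX (Submodule.subset_span ⟨j, hj, rfl⟩)
    · have hback : ∀ v : Fin n → ℤ, piL n v ∈ G → v ∈ X := by
        intro v hv
        obtain ⟨x', hx', hpx⟩ := hv
        have hker : v - x' ∈ Vsp n := by
          rw [← hkerV, LinearMap.mem_ker, map_sub, hpx, sub_self]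
        have := Submodule.add_mem _ (hVX hker) hx'
        simpa using this
      rcases hz with rfl | hz
      · exact hback _ (by rw [hpre1, hG]; exact Submodule.subset_span (Or.inl rfl))
      · rw [Set.mem_singleton_iff] at hz
        subst hz
        exact hback _ (by rw [hpre2, hG]; exact Submodule.subset_span (Or.inr rfl))
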